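/- Define the sequence of positive integers a_n = ⌊exp(√(n·log n))⌋ if n ≥ 2 is a perfect square and a_n = 1 otherwise (with a_1 = 1). Then (i) there exists a constant C > 0 such that ∑_{k=1}^{n} log(a_k + 1) ≤ C·n·√(log n) for all n ≥ 2, and (ii) there exists a constant c > 0 such that (log a_n)² ≥ c·n·log n for every perfect square n ≥ 4. (Here log is the natural logarithm and ⌊·⌋ is the floor function.) -/
import Mathlib

open Real Finset

lemma card_squares_le (n : ℕ) :
    ((Finset.Icc 1 n).filter (fun k => IsSquare k)).card ≤ Nat.sqrt n := by
  have hsub : ((Finset.Icc 1 n).filter (fun k => IsSquare k)) ⊆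
      (Finset.Icc 1 (Nat.sqrt n)).image (fun m => m * m) := by
    intro k hk
    simp only [Finset.mem_filter, Finset.mem_Icc] at hk
    obtain ⟨⟨hk1, hkn⟩, m, hm⟩ := hk
    simp only [Finset.mem_image, Finset.mem_Icc]
    refine ⟨m, ⟨?_, ?_⟩, hm.symm⟩
    · by_contra h
      push_neg at h
      interval_cases m
      omega
    · exact (Nat.le_sqrt).2 (by omega)
  calc _ ≤ ((Finset.Icc 1 (Nat.sqrt n)).image (fun m => m * m)).card :=
        Finset.card_le_card hsub
    _ ≤ (Finset.Icc 1 (Nat.sqrt n)).card := Finset.card_image_le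
    _ ≤ Nat.sqrt n := by simp

set_option maxHeartbeats 1000000 in
/-- The final example of Section 3.3. -/
theorem example_inverse_David_not_finite_distortion (a : ℕ → ℕ)
    (hadef : ∀ n : ℕ, a n =
      if 2 ≤ n ∧ IsSquare n then ⌊Real.exp (Real.sqrt ((n : ℝ) * Real.log n))⌋₊ else 1) :
    (∃ C : ℝ, 0 < C ∧ ∀ n : ℕ, 2 ≤ n →
      ∑ k ∈ Finset.Icc 1 n, Real.log ((a k : ℝ) + 1) ≤
        C * (n : ℝ) * Real.sqrt (Real.log n)) ∧
    (∃ c : ℝ, 0 < c ∧ ∀ n : ℕ, 4 ≤ n → IsSquare n →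
      c * (n : ℝ) * Real.log n ≤ (Real.log (a n)) ^ 2) := by
  constructor
  · refine ⟨5, by norm_num, fun n hn => ?_⟩
    have hn1 : (1 : ℝ) ≤ n := by exact_mod_cast Nat.one_le_of_lt hn
    have hn0 : (0 : ℝ) ≤ n := by linarith
    have hlog2 : Real.log 2 ≤ 1 := by
      have := Real.log_two_lt_d9; linarith
    have hlogn : (1/4 : ℝ) ≤ Real.log n := by
      have h2 : Real.log 2 ≤ Real.log n :=
        Real.log_le_log (by norm_num) (by exact_mod_cast hn)
      have := Real.log_two_gt_d9; linarith
    have hlogn0 : (0 : ℝ) ≤ Real.log n := by linarith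
    set B : ℝ := Real.sqrt ((n : ℝ) * Real.log n) + 1 with hB
    have hB0 : (0 : ℝ) ≤ B := by positivity
    -- termwise bound
    have hterm : ∀ k ∈ Finset.Icc 1 n, Real.log ((a k : ℝ) + 1) ≤
        Real.log 2 + (if IsSquare k then (1:ℝ) else 0) * B := by
      intro k hk
      simp only [Finset.mem_Icc] at hk
      by_cases h : 2 ≤ k ∧ IsSquare k
      · rw [hadef k, if_pos h]
        set s : ℝ := Real.sqrt ((k : ℝ) * Real.log k) with hs
        have hs0 : 0 ≤ s := Real.sqrt_nonneg _
        have hfl : (⌊Real.exp s⌋₊ : ℝ) ≤ Real.exp s := Nat.floor_le (Real.exp_nonneg _)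
        have h1 : (⌊Real.exp s⌋₊ : ℝ) + 1 ≤ 2 * Real.exp s := by
          have : (1:ℝ) ≤ Real.exp s := Real.one_le_exp hs0
          linarith
        have hpos : (0:ℝ) < (⌊Real.exp s⌋₊ : ℝ) + 1 := by positivity
        have h2 : Real.log ((⌊Real.exp s⌋₊ : ℝ) + 1) ≤ Real.log (2 * Real.exp s) :=
          Real.log_le_log hpos h1
        rw [Real.log_mul (by norm_num) (Real.exp_ne_zero _), Real.log_exp] at h2
        have hsB : s ≤ B := by
          have hk1 : (1:ℝ) ≤ (k:ℝ) := by exact_mod_cast hk.1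
          have hk0 : (0:ℝ) ≤ Real.log k := Real.log_nonneg hk1
          have hkn : (k:ℝ) ≤ (n:ℝ) := by exact_mod_cast hk.2
          have hlk : Real.log k ≤ Real.log n := Real.log_le_log (by linarith) hkn
          have hm : (k:ℝ) * Real.log k ≤ (n:ℝ) * Real.log n :=
            mul_le_mul hkn hlk hk0 hn0
          have := Real.sqrt_le_sqrt hm
          rw [hB]; linarith
        rw [if_pos h.2, one_mul]
        linarith
      · rw [hadef k, if_neg h]
        have : Real.log ((1:ℕ) + 1 : ℝ) = Real.log 2 := by norm_num
        rw [show ((1:ℕ):ℝ) + 1 = 2 by norm_num]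
        have : (0:ℝ) ≤ (if IsSquare k then (1:ℝ) else 0) * B := by positivity
        linarith
    have hsum : ∑ k ∈ Finset.Icc 1 n, Real.log ((a k : ℝ) + 1) ≤
        ∑ k ∈ Finset.Icc 1 n, (Real.log 2 + (if IsSquare k then (1:ℝ) else 0) * B) :=
      Finset.sum_le_sum hterm
    rw [Finset.sum_add_distrib, Finset.sum_const, ← Finset.sum_mul, Finset.sum_boole] at hsum
    have hcard : (((Finset.Icc 1 n).filter (fun k => IsSquare k)).card : ℝ) ≤ Real.sqrt n := by
      have h1 : (((Finset.Icc 1 n).filter (fun k => IsSquare k)).card : ℝ) ≤ (Nat.sqrt n : ℝ) := by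
        exact_mod_cast card_squares_le n
      refine h1.trans ?_
      have h2 : ((Nat.sqrt n : ℝ))^2 ≤ (n:ℝ) := by
        exact_mod_cast Nat.sqrt_le' n
      calc (Nat.sqrt n : ℝ) = Real.sqrt (((Nat.sqrt n : ℝ))^2) :=
            (Real.sqrt_sq (by positivity)).symm
        _ ≤ Real.sqrt n := Real.sqrt_le_sqrt h2
    have hcardIcc : (Finset.Icc 1 n).card = n := by
      rw [Nat.card_Icc]; omega
    rw [hcardIcc] at hsum
    have hsplit : Real.sqrt ((n:ℝ) * Real.log n) = Real.sqrt n * Real.sqrt (Real.log n) :=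
      Real.sqrt_mul hn0 _
    set t : ℝ := Real.sqrt (Real.log n) with ht
    have ht2 : (1/2 : ℝ) ≤ t := by
      rw [ht, show (1/2:ℝ) = Real.sqrt (1/4) by
        rw [show (1/4:ℝ) = (1/2)^2 by norm_num, Real.sqrt_sq]; norm_num]
      exact Real.sqrt_le_sqrt hlogn
    have hss : Real.sqrt n * Real.sqrt n = (n:ℝ) := Real.mul_self_sqrt hn0
    have h1s : (1:ℝ) ≤ Real.sqrt n := by
      rw [show (1:ℝ) = Real.sqrt 1 by simp]
      exact Real.sqrt_le_sqrt hn1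
    have hs0 : (0:ℝ) ≤ Real.sqrt n := Real.sqrt_nonneg _
    have hmain : n • Real.log 2 +
        ((((Finset.Icc 1 n).filter (fun k => IsSquare k)).card : ℝ)) * B ≤
        5 * (n:ℝ) * t := by
      have hBval : B = Real.sqrt n * t + 1 := by rw [hB, hsplit]
      have h3 : (((Finset.Icc 1 n).filter (fun k => IsSquare k)).card : ℝ) * B ≤
          Real.sqrt n * B := by
        apply mul_le_mul_of_nonneg_right hcard hB0
      have h4 : Real.sqrt n * B = (n:ℝ) * t + Real.sqrt n := by
        rw [hBval]; nlinarith [hss]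
      have h5 : (n:ℝ) * Real.log 2 ≤ (n:ℝ) := by nlinarith
      have h6 : (n:ℝ) ≤ 2 * (n:ℝ) * t := by nlinarith
      have hsn : Real.sqrt (n:ℝ) ≤ (n:ℝ) := by nlinarith [hss, h1s]
      rw [nsmul_eq_mul]
      linarith [h3, h4, h5, h6, hsn]
    calc ∑ k ∈ Finset.Icc 1 n, Real.log ((a k : ℝ) + 1) ≤ _ := hsum
      _ ≤ 5 * (n:ℝ) * t := hmain
      _ = 5 * (n:ℝ) * Real.sqrt (Real.log n) := by rw [ht]
  · refine ⟨1/4, by norm_num, fun n hn hsq => ?_⟩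
    have h2n : 2 ≤ n := by omega
    rw [hadef n, if_pos ⟨h2n, hsq⟩]
    set s : ℝ := Real.sqrt ((n : ℝ) * Real.log n) with hsdef
    have hn4 : (4:ℝ) ≤ n := by exact_mod_cast hn
    have hlogn : (1:ℝ) ≤ Real.log n := by
      have h4 : Real.log 4 ≤ Real.log n := Real.log_le_log (by norm_num) hn4
      have : (1:ℝ) ≤ Real.log 4 := by
        rw [Real.le_log_iff_exp_le (by norm_num)]
        have := Real.exp_one_lt_d9; linarith
      linarith
    have hnl4 : (4:ℝ) ≤ (n:ℝ) * Real.log n := by nlinarith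
    have hs2 : (2:ℝ) ≤ s := by
      rw [hsdef, show (2:ℝ) = Real.sqrt 4 by rw [show (4:ℝ) = 2^2 by norm_num, Real.sqrt_sq]; norm_num]
      exact Real.sqrt_le_sqrt hnl4
    have hs0 : (0:ℝ) ≤ s := by linarith
    have hexp2 : (2:ℝ) ≤ Real.exp s := by
      have := Real.add_one_le_exp s; linarith
    have hfloor : Real.exp s / 2 ≤ (⌊Real.exp s⌋₊ : ℝ) := by
      have h1 : Real.exp s - 1 < (⌊Real.exp s⌋₊ : ℝ) := Nat.sub_one_lt_floor _
      linarith
    have hlogfl : s / 2 ≤ Real.log (⌊Real.exp s⌋₊ : ℝ) := by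
      have hpos : (0:ℝ) < Real.exp s / 2 := by positivity
      have h1 : Real.log (Real.exp s / 2) ≤ Real.log (⌊Real.exp s⌋₊ : ℝ) :=
        Real.log_le_log hpos hfloor
      rw [Real.log_div (Real.exp_ne_zero _) (by norm_num), Real.log_exp] at h1
      have hlog2 : Real.log 2 ≤ 1 := by have := Real.log_two_lt_d9; linarith
      linarith
    have hsq2 : s ^ 2 = (n:ℝ) * Real.log n := Real.sq_sqrt (by linarith)
    have : (s/2)^2 ≤ (Real.log (⌊Real.exp s⌋₊ : ℝ))^2 :=
      pow_le_pow_left₀ (by positivity) hlogfl 2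
    calc (1/4 : ℝ) * n * Real.log n = (s/2)^2 := by rw [div_pow, hsq2]; ring
      _ ≤ _ := this
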